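/- Let λ ∈ ℂ, m ≥ 1 an integer, and R a p×p real matrix with nonnegative entries. Let rr be the 1×p row vector with rr_j := max_i R_{ij}, and let 1_p be the all-ones column vector of length p. Define real p×p matrices 𝖱₀, …, 𝖱_{m−1} by 𝖱₀ := R and 𝖱_{k+1} := |λ+k+1|·𝖱_k + |∏_{i=0}^{k}(λ+i)|·R + (1_p·rr)·𝖱_k for k = 0, …, m−2. Then for any p×p complex matrices B₀, …, B_{m−1} satisfying |B_i − (λ+i)·I_p| ≤ R entrywise for all i, one has | B_{m−1}·B_{m−2}·⋯·B₀ − (∏_{i=0}^{m−1}(λ+i))·I_p | ≤ 𝖱_{m−1} entrywise. -/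

import Mathlib

/-- The p×p matrix `1_p · rr`, where `rr_j = max_i R_{ij}`. -/
noncomputable def colMaxMat {p : ℕ} (R : Matrix (Fin p) (Fin p) ℝ) :
    Matrix (Fin p) (Fin p) ℝ :=
  Matrix.of fun _ j => ⨆ i, R i j

/-- The radius sequence 𝖱₀ := R,
`𝖱_{k+1} := |λ+k+1|·𝖱_k + |∏_{i=0}^{k}(λ+i)|·R + (1_p·rr)·𝖱_k`. -/
noncomputable def Rseq {p : ℕ} (lam : ℂ) (R : Matrix (Fin p) (Fin p) ℝ) :
    ℕ → Matrix (Fin p) (Fin p) ℝ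
  | 0 => R
  | (k + 1) => ‖lam + k + 1‖ • Rseq lam R k +
      ‖∏ i ∈ Finset.range (k + 1), (lam + i)‖ • R +
      colMaxMat R * Rseq lam R k

lemma colMaxMat_nonneg {p : ℕ} (R : Matrix (Fin p) (Fin p) ℝ) (hR : ∀ i j, 0 ≤ R i j)
    (a b : Fin p) : 0 ≤ colMaxMat R a b :=
  Real.iSup_nonneg fun i => hR i b

lemma le_colMaxMat {p : ℕ} (R : Matrix (Fin p) (Fin p) ℝ) (a b : Fin p) :
    R a b ≤ colMaxMat R a b := by
  have : R a b ≤ ⨆ i, R i b :=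
    le_ciSup (Set.Finite.bddAbove (Set.finite_range (fun i => R i b))) a
  simpa [colMaxMat] using this

lemma Rseq_nonneg {p : ℕ} (lam : ℂ) (R : Matrix (Fin p) (Fin p) ℝ)
    (hR : ∀ i j, 0 ≤ R i j) : ∀ k a b, 0 ≤ Rseq lam R k a b := by
  intro k
  induction k with
  | zero => exact hR
  | succ k ih =>
    intro a b
    simp only [Rseq, Matrix.add_apply, Matrix.smul_apply, Matrix.mul_apply, smul_eq_mul]
    have h1 : 0 ≤ ‖lam + k + 1‖ * Rseq lam R k a b :=
      mul_nonneg (norm_nonneg _) (ih a b)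
    have h2 : 0 ≤ ‖∏ i ∈ Finset.range (k + 1), (lam + i)‖ * R a b :=
      mul_nonneg (norm_nonneg _) (hR a b)
    have h3 : 0 ≤ ∑ j, colMaxMat R a j * Rseq lam R k j b :=
      Finset.sum_nonneg fun j _ => mul_nonneg (colMaxMat_nonneg R hR a j) (ih j b)
    linarith

lemma key {p : ℕ} (lam : ℂ) (R : Matrix (Fin p) (Fin p) ℝ) (hR : ∀ i j, 0 ≤ R i j)
    (B : ℕ → Matrix (Fin p) (Fin p) ℂ)
    (hB : ∀ i : ℕ, ∀ a b, ‖B i a b - ((lam + (i : ℕ)) • (1 : Matrix (Fin p) (Fin p) ℂ)) a b‖ ≤ R a b) :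
    ∀ k, ∀ a b, ‖(List.ofFn (fun i : Fin (k + 1) => B i)).reverse.prod a b -
        ((∏ i ∈ Finset.range (k + 1), (lam + i)) • (1 : Matrix (Fin p) (Fin p) ℂ)) a b‖ ≤
      Rseq lam R k a b := by
  intro k
  induction k with
  | zero =>
    intro a b
    simpa [Finset.prod_range_one, Rseq] using hB 0 a b
  | succ k ih =>
    intro a b
    set P : Matrix (Fin p) (Fin p) ℂ := (List.ofFn (fun i : Fin (k + 1) => B i)).reverse.prod with hP
    have hcons : (List.ofFn (fun i : Fin (k + 2) => B i)).reverse.prod = B (k + 1) * P := by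
      rw [List.ofFn_succ', List.concat_eq_append, List.reverse_append]
      simp [hP]
    set x : ℂ := lam + (k + 1 : ℕ) with hx
    set c : ℂ := ∏ i ∈ Finset.range (k + 1), (lam + i) with hc
    set E : Matrix (Fin p) (Fin p) ℂ := B (k + 1) - x • 1 with hE
    set F : Matrix (Fin p) (Fin p) ℂ := P - c • 1 with hF
    have hmain : B (k + 1) * P - (c * x) • (1 : Matrix (Fin p) (Fin p) ℂ)
        = x • F + c • E + E * F := by
      have h1 : B (k + 1) = x • 1 + E := by rw [hE]; abel
      have h2 : P = c • 1 + F := by rw [hF]; abel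
      rw [h1, h2]
      simp only [Matrix.add_mul, Matrix.mul_add, Matrix.smul_mul, Matrix.mul_smul,
        one_mul, mul_one, smul_smul]
      module
    have hprod : (∏ i ∈ Finset.range (k + 2), (lam + i)) = c * x := by
      rw [Finset.prod_range_succ, hc, hx]
    rw [hcons, hprod]
    have lhs_eq : (B (k + 1) * P) a b - ((c * x) • (1 : Matrix (Fin p) (Fin p) ℂ)) a b
        = (x • F + c • E + E * F) a b := by
      rw [← hmain]; simp [Matrix.sub_apply]
    rw [lhs_eq]
    have hEab : ∀ a' b', ‖E a' b'‖ ≤ R a' b' := by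
      intro a' b'
      simpa [hE, hx, Matrix.sub_apply, Nat.cast_add, Nat.cast_one] using hB (k + 1) a' b'
    have hFab : ∀ a' b', ‖F a' b'‖ ≤ Rseq lam R k a' b' := by
      intro a' b'
      simpa [hF, Matrix.sub_apply, hc] using ih a' b'
    have entry : (x • F + c • E + E * F) a b
        = x * F a b + c * E a b + ∑ j, E a j * F j b := by
      simp [Matrix.add_apply, Matrix.smul_apply, Matrix.mul_apply, smul_eq_mul]
    rw [entry]
    have step1 : ‖x * F a b + c * E a b + ∑ j, E a j * F j b‖
        ≤ ‖x‖ * Rseq lam R k a b + ‖c‖ * R a b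
          + ∑ j, colMaxMat R a j * Rseq lam R k j b := by
      calc ‖x * F a b + c * E a b + ∑ j, E a j * F j b‖
          ≤ ‖x * F a b‖ + ‖c * E a b‖
            + ‖∑ j, E a j * F j b‖ := by
            refine (norm_add_le _ _).trans ?_
            gcongr
            exact norm_add_le _ _
        _ ≤ ‖x‖ * Rseq lam R k a b + ‖c‖ * R a b
            + ∑ j, colMaxMat R a j * Rseq lam R k j b := by
            gcongr ?_ + ?_ + ?_
            · rw [norm_mul]
              exact mul_le_mul_of_nonneg_left (hFab a b) (norm_nonneg _)
            · rw [norm_mul]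
              exact mul_le_mul_of_nonneg_left (hEab a b) (norm_nonneg _)
            · refine (norm_sum_le _ _).trans ?_
              refine Finset.sum_le_sum fun j _ => ?_
              rw [norm_mul]
              calc ‖E a j‖ * ‖F j b‖
                  ≤ R a j * Rseq lam R k j b := by
                    apply mul_le_mul (hEab a j) (hFab j b) (norm_nonneg _) (hR a j)
                _ ≤ colMaxMat R a j * Rseq lam R k j b :=
                    mul_le_mul_of_nonneg_right (le_colMaxMat R a j)
                      (Rseq_nonneg lam R hR k j b)
    refine step1.trans ?_
    have hxk : (lam + ↑k + 1 : ℂ) = x := by push_cast [hx]; ring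
    simp only [Rseq, Matrix.add_apply, Matrix.smul_apply, Matrix.mul_apply, smul_eq_mul,
      hxk, hc]
    exact le_rfl

theorem stmt_9 {p : ℕ} (lam : ℂ) (m : ℕ) (hm : 1 ≤ m)
    (R : Matrix (Fin p) (Fin p) ℝ) (hR : ∀ i j, 0 ≤ R i j)
    (B : Fin m → Matrix (Fin p) (Fin p) ℂ)
    (hB : ∀ i : Fin m, ∀ a b, ‖B i a b - ((lam + (i : ℕ)) • (1 : Matrix (Fin p) (Fin p) ℂ)) a b‖ ≤ R a b) :
    ∀ a b, ‖((List.ofFn B).reverse.prod) a b -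
          ((∏ i ∈ Finset.range m, (lam + i)) • (1 : Matrix (Fin p) (Fin p) ℂ)) a b‖ ≤
      Rseq lam R (m - 1) a b := by
  obtain ⟨k, rfl⟩ : ∃ k, m = k + 1 := ⟨m - 1, (Nat.succ_pred_eq_of_pos hm).symm⟩
  set B' : ℕ → Matrix (Fin p) (Fin p) ℂ := fun n =>
    if h : n < k + 1 then B ⟨n, h⟩ else (lam + n) • 1 with hB'def
  have hB' : ∀ i : ℕ, ∀ a b, ‖B' i a b - ((lam + (i : ℕ)) • (1 : Matrix (Fin p) (Fin p) ℂ)) a b‖ ≤ R a b := by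
    intro i a b
    by_cases h : i < k + 1
    · simpa [hB'def, h, Nat.lt_succ_iff.mp h] using hB ⟨i, h⟩ a b
    · simp [hB'def, h, hR a b, show ¬ i ≤ k by omega]
  have hlist : List.ofFn B = List.ofFn (fun i : Fin (k + 1) => B' i) := by
    apply congrArg List.ofFn
    funext i
    simp [hB'def, i.isLt, Nat.not_lt.mpr (Nat.le_of_lt_succ i.isLt)]
  intro a b
  rw [hlist]
  simpa using key lam R hR B' hB' k a b
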